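/- arXiv:1107.1017 — 2 statements merged into one kernel-verified Lean document; each statement's English description precedes it below -/
import Mathlib

section
/- Generalized splitting of a concatenation e₁ ++ … ++ eₙ: if l' = |e₁| + … + |e_{i−1}|, l' ≤ l, and l ≤ l' + |e_i|, then sub(e₁ ++ … ++ eₙ, 0, l) = e₁ ++ … ++ e_{i−1} ++ sub(e_i, 0, l − l'). -/
abbrev BS := List Bool

def sub (b : BS) (o l : ℕ) : Option BS :=
  if o + l ≤ b.length then some ((b.drop o).take l) else none

/-- Soundness of the `cutL` rule: cutting the left part of length `l` from a
concatenation `e₁ ++ … ++ eₙ` by splitting within the `i`-th component. -/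
theorem cutL_sound (es : List BS) (i : ℕ) (hi : i < es.length) (l : ℕ)
    (l' : ℕ) (hl' : l' = ((es.take i).map List.length).sum)
    (h1 : l' ≤ l) (h2 : l ≤ l' + (es.get ⟨i, hi⟩).length) :
    sub es.flatten 0 l =
      (sub (es.get ⟨i, hi⟩) 0 (l - l')).map
        (fun s => (es.take i).flatten ++ s) := by
  set B := es.get ⟨i, hi⟩ with hB
  have hA : ((es.take i).flatten).length = l' := by
    rw [hl', List.length_flatten]
  have hdecomp : es.flatten = (es.take i).flatten ++ (B :: es.drop (i+1)).flatten := by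
    have : es = es.take i ++ B :: es.drop (i+1) := by
      rw [hB, List.get_eq_getElem]
      conv_lhs => rw [← List.take_append_drop i es, List.drop_eq_getElem_cons hi]
    conv_lhs => rw [this]
    simp
  have hlB : l - l' ≤ B.length := by omega
  have hlen : l ≤ es.flatten.length := by
    rw [hdecomp, List.length_append, hA]
    simp only [List.flatten_cons, List.length_append]
    omega
  rw [sub, sub, if_pos (by omega), if_pos (by omega)]
  simp only [List.drop_zero, Option.map_some]
  congr 1
  rw [hdecomp, List.take_append, hA,
    List.take_of_length_le (by omega)]
  congr 1
  simp only [List.flatten_cons]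
  rw [List.take_append, Nat.sub_eq_zero_of_le hlB,
    List.take_zero, List.append_nil]
end

section
/- Generalized right split of a concatenation: under the same hypotheses as left splitting (l' = |e₁|+…+|e_{i−1}|, l' ≤ l ≤ l' + |e_i|, and setting L = |e₁ ++ … ++ eₙ|), one has sub(e₁ ++ … ++ eₙ, l, L − l) = sub(e_i, l − l', |e_i| − (l − l')) ++ e_{i+1} ++ … ++ eₙ. -/
/-- Soundness of the `cutR` rule: the right part starting at position `l` of a
concatenation `e₁ ++ … ++ eₙ` is obtained by splitting within the `i`-th component. -/
theorem cutR_sound (es : List BS) (i : ℕ) (hi : i < es.length) (l : ℕ)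
    (l' : ℕ) (hl' : l' = ((es.take i).map List.length).sum)
    (h1 : l' ≤ l) (h2 : l ≤ l' + (es.get ⟨i, hi⟩).length)
    (L : ℕ) (hL : L = es.flatten.length) :
    sub es.flatten l (L - l) =
      (sub (es.get ⟨i, hi⟩) (l - l') ((es.get ⟨i, hi⟩).length - (l - l'))).map
        (fun s => s ++ (es.drop (i + 1)).flatten) := by
  set a := es.get ⟨i, hi⟩ with ha
  -- decompose es
  have hdec : es = es.take i ++ a :: es.drop (i + 1) := by
    rw [ha]
    simpa using (List.take_append_getElem es i hi ▸ rfl :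
      es = es.take i ++ [es.get ⟨i, hi⟩] ++ es.drop (i+1))
  have hlen' : (es.take i).flatten.length = l' := by
    rw [hl', List.length_flatten, List.map_take]
  have hflat : es.flatten = (es.take i).flatten ++ (a ++ (es.drop (i+1)).flatten) := by
    conv_lhs => rw [hdec]
    simp
  have hlL : l ≤ L := by
    rw [hL, hflat]
    simp only [List.length_append, hlen']
    omega
  have hla : l - l' ≤ a.length := by omega
  rw [sub, sub, if_pos (by omega), if_pos (by omega)]
  simp only [Option.map_some]
  congr 1
  have htake : (es.flatten.drop l).take (L - l) = es.flatten.drop l := by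
    apply List.take_of_length_le
    simp [hL]
  have htake2 : ((a.drop (l - l')).take (a.length - (l - l'))) = a.drop (l - l') := by
    apply List.take_of_length_le
    simp
  rw [htake, htake2, hflat, List.drop_append, hlen',
    List.drop_of_length_le (by omega), List.nil_append,
    List.drop_append]
  have : l - l' - a.length = 0 := by omega
  rw [this, List.drop_zero]
end
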